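/- Let (x̄, ȳ) be a W_I-stationary point of the relaxed MPCaC problem, for some index set I with I_{0+} ∪ I_{01} ⊆ I ⊆ I_0. Then (x̄, ȳ) is AW-stationary for this problem. -/

import Mathlib

open Filter Topology
open scoped Classical

noncomputable section

/-- `ℝⁿ` as a Euclidean space. -/
abbrev E (n : ℕ) : Type := EuclideanSpace ℝ (Fin n)

/-- The constraint function `θ(y) = n − α − eᵀ y` of the relaxed MPCaC problem. -/
def theta {n : ℕ} (α : ℕ) (y : E n) : ℝ := (n : ℝ) - (α : ℝ) - ∑ i, y i

/-- Feasibility for the relaxed MPCaC problem: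
`g(x) ≤ 0, h(x) = 0, θ(y) ≤ 0, xᵢ yᵢ = 0, 0 ≤ yᵢ ≤ 1`. -/
def relFeas {n m p : ℕ} (g : E n → Fin m → ℝ) (h : E n → Fin p → ℝ) (α : ℕ)
    (x y : E n) : Prop :=
  (∀ i, g x i ≤ 0) ∧ (∀ j, h x j = 0) ∧ theta α y ≤ 0 ∧
  (∀ i, x i * y i = 0) ∧ (∀ i, 0 ≤ y i ∧ y i ≤ 1)

/-- `∇f(x) + Σᵢ λᵍᵢ ∇gᵢ(x) + Σⱼ λʰⱼ ∇hⱼ(x)`. -/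
def gradLx {n m p : ℕ} (f : E n → ℝ) (g : E n → Fin m → ℝ) (h : E n → Fin p → ℝ)
    (x : E n) (lg : Fin m → ℝ) (lh : Fin p → ℝ) : E n :=
  gradient f x + ∑ i, lg i • gradient (fun z => g z i) x
    + ∑ j, lh j • gradient (fun z => h z j) x

/-- `i ∈ I_{0+}(x̄,ȳ) ∪ I_{01}(x̄,ȳ)`, i.e. `x̄ᵢ = 0` and (`0 < ȳᵢ < 1` or `ȳᵢ = 1`). -/
def inI0p01 {n : ℕ} (xb yb : E n) (i : Fin n) : Prop :=
  xb i = 0 ∧ ((0 < yb i ∧ yb i < 1) ∨ yb i = 1)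

/-- Admissibility of the index set `I`: `I_{0+} ∪ I_{01} ⊆ I ⊆ I_0`. -/
def idxOK {n : ℕ} (xb yb : E n) (I : Finset (Fin n)) : Prop :=
  (∀ i, inI0p01 xb yb i → i ∈ I) ∧ (∀ i ∈ I, xb i = 0)

/-- Feasibility for the tightened problem `TNLP_I(x̄,ȳ)`:
`g(x) ≤ 0, h(x) = 0, θ(y) ≤ 0, xᵢ = 0 (i ∈ I), −yᵢ ≤ 0 (i ∈ I_{0+} ∪ I_{01}),`
`−yᵢ = 0 (i ∈ I_{00} ∪ I_{±0}), y − e ≤ 0`. Note `I_{00} ∪ I_{±0} = {i | ȳᵢ = 0}`. -/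
def tnlpFeas {n m p : ℕ} (g : E n → Fin m → ℝ) (h : E n → Fin p → ℝ) (α : ℕ)
    (xb yb : E n) (I : Finset (Fin n)) (x y : E n) : Prop :=
  (∀ i, g x i ≤ 0) ∧ (∀ j, h x j = 0) ∧ theta α y ≤ 0 ∧
  (∀ i ∈ I, x i = 0) ∧
  (∀ i, inI0p01 xb yb i → -(y i) ≤ 0) ∧
  (∀ i, yb i = 0 → -(y i) = 0) ∧
  (∀ i, y i - 1 ≤ 0)

/-- `W_I`-stationarity for the relaxed MPCaC problem (Definition 2.9 of the paper). -/
def WStat {n m p : ℕ} (f : E n → ℝ) (g : E n → Fin m → ℝ) (h : E n → Fin p → ℝ)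
    (α : ℕ) (xb yb : E n) (I : Finset (Fin n)) : Prop :=
  ∃ (lg : Fin m → ℝ) (lh : Fin p → ℝ) (lθ : ℝ) (lG : Fin n → ℝ) (lH lH' : Fin n → ℝ),
    (∀ i, 0 ≤ lg i) ∧ 0 ≤ lθ ∧ (∀ i, 0 ≤ lH' i) ∧
    gradLx f g h xb lg lh + ∑ i ∈ I, lG i • EuclideanSpace.single i 1 = 0 ∧
    (∀ i, -lθ - lH i + lH' i = 0) ∧
    (∑ i, lg i * g xb i) = 0 ∧
    lθ * theta α yb = 0 ∧
    (∀ i, inI0p01 xb yb i → lH i = 0) ∧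
    (∑ i, lH' i * (yb i - 1)) = 0

/-- Approximate weak (`AW`) stationarity for the relaxed MPCaC problem
(Definition 3.1 of the paper). -/
def AWStat {n m p : ℕ} (f : E n → ℝ) (g : E n → Fin m → ℝ) (h : E n → Fin p → ℝ)
    (α : ℕ) (xb yb : E n) : Prop :=
  ∃ (x y : ℕ → E n) (lg : ℕ → Fin m → ℝ) (lh : ℕ → Fin p → ℝ) (lθ : ℕ → ℝ)
    (lG : ℕ → E n) (lH lH' : ℕ → Fin n → ℝ),
    (∀ k i, 0 ≤ lg k i) ∧ (∀ k, 0 ≤ lθ k) ∧ (∀ k i, 0 ≤ lH' k i) ∧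
    Tendsto x atTop (𝓝 xb) ∧ Tendsto y atTop (𝓝 yb) ∧
    Tendsto (fun k => gradLx f g h (x k) (lg k) (lh k) + lG k) atTop (𝓝 0) ∧
    Tendsto (fun k i => -(lθ k) - lH k i + lH' k i) atTop (𝓝 (0 : Fin n → ℝ)) ∧
    (∀ i, Tendsto (fun k => min (-(g (x k) i)) (lg k i)) atTop (𝓝 0)) ∧
    Tendsto (fun k => min (-(theta α (y k))) (lθ k)) atTop (𝓝 0) ∧
    (∀ i, Tendsto (fun k => min |x k i| |lG k i|) atTop (𝓝 0)) ∧
    (∀ i, Tendsto (fun k => min (y k i) |lH k i|) atTop (𝓝 0)) ∧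
    (∀ i, Tendsto (fun k => min (1 - y k i) (lH' k i)) atTop (𝓝 0))

/-- Lemma 3.4 of the paper. If `(x̄,ȳ)` is a
`W_I`-stationary point of the relaxed MPCaC problem, for some index set `I`
with `I_{0+} ∪ I_{01} ⊆ I ⊆ I_0`, then `(x̄,ȳ)` is `AW`-stationary. -/
theorem WStat_implies_AWStat {n m p : ℕ}
    (f : E n → ℝ) (g : E n → Fin m → ℝ) (h : E n → Fin p → ℝ) (α : ℕ)
    (xb yb : E n) (hfeas : relFeas g h α xb yb)
    (I : Finset (Fin n)) (hI : idxOK xb yb I)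
    (hW : WStat f g h α xb yb I) :
    AWStat f g h α xb yb := by
  obtain ⟨hg0, hh0, hθ0, hxy, hy01⟩ := hfeas
  obtain ⟨lg, lh, lθ, lG, lH, lH', hlg, hlθ, hlH', hgrad, hdual, hcompg, hcompθ, hH0, hcompH'⟩ := hW
  -- constant sequences
  refine ⟨fun _ => xb, fun _ => yb, fun _ => lg, fun _ => lh, fun _ => lθ,
    fun _ => ∑ i ∈ I, lG i • EuclideanSpace.single i 1, fun _ => lH, fun _ => lH',
    fun _ => hlg, fun _ => hlθ, fun _ => hlH', tendsto_const_nhds, tendsto_const_nhds,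
    ?_, ?_, ?_, ?_, ?_, ?_, ?_⟩
  · simpa [hgrad] using tendsto_const_nhds
  · have : (fun i => -lθ - lH i + lH' i) = (0 : Fin n → ℝ) := by
      funext i; exact hdual i
    simpa [this] using tendsto_const_nhds
  · -- min(-g, lg) = 0
    intro i
    have hterm : ∀ j ∈ Finset.univ, (0:ℝ) ≤ -(lg j * g xb j) := fun j _ => by
      have := mul_nonneg (hlg j) (neg_nonneg.2 (hg0 j))
      linarith [this]
    have hsum : ∑ j, -(lg j * g xb j) = 0 := by
      rw [Finset.sum_neg_distrib, hcompg, neg_zero]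
    have hzero := (Finset.sum_eq_zero_iff_of_nonneg hterm).1 hsum i (Finset.mem_univ i)
    have hz : lg i * g xb i = 0 := by linarith
    rcases mul_eq_zero.1 hz with h1 | h2
    · have : min (-(g xb i)) (lg i) = 0 :=
        le_antisymm (by simpa [h1] using min_le_right (-(g xb i)) (0:ℝ))
          (le_min (by linarith [hg0 i]) (hlg i))
      simpa [this] using tendsto_const_nhds
    · have : min (-(g xb i)) (lg i) = 0 :=
        le_antisymm (by simpa [h2] using min_le_left (0:ℝ) (lg i))
          (le_min (by linarith [hg0 i]) (hlg i))
      simpa [this] using tendsto_const_nhds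
  · -- min(-θ, lθ) = 0
    rcases mul_eq_zero.1 hcompθ with h1 | h2
    · have : min (-(theta α yb)) lθ = 0 :=
        le_antisymm (by simpa [h1] using min_le_right (-(theta α yb)) (0:ℝ))
          (le_min (by linarith) hlθ)
      simpa [this] using tendsto_const_nhds
    · have : min (-(theta α yb)) lθ = 0 :=
        le_antisymm (by simpa [h2] using min_le_left (0:ℝ) lθ)
          (le_min (by linarith) hlθ)
      simpa [this] using tendsto_const_nhds
  · -- min(|xb i|, |lG i|)
    intro i
    by_cases hi : i ∈ I
    · have hx0 : xb i = 0 := hI.2 i hi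
      have : min |xb i| |(∑ j ∈ I, lG j • EuclideanSpace.single j (1:ℝ)) i| = 0 := by
        rw [hx0]; simp
      exact (tendsto_const_nhds (x := (0:ℝ))).congr (fun _ => this.symm)
    · have hG0 : (∑ j ∈ I, lG j • EuclideanSpace.single j (1:ℝ)) i = 0 := by
        have : ∀ j ∈ I, (lG j • EuclideanSpace.single j (1:ℝ)) i = 0 := by
          intro j hj
          have hji : j ≠ i := fun hji => hi (hji ▸ hj)
          simp [EuclideanSpace.single_apply, Ne.symm hji]
        calc (∑ j ∈ I, lG j • EuclideanSpace.single j (1:ℝ)) i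
            = ∑ j ∈ I, (lG j • EuclideanSpace.single j (1:ℝ)) i := by
              rw [WithLp.ofLp_sum, Finset.sum_apply]
          _ = 0 := Finset.sum_eq_zero this
      have : min |xb i| |(∑ j ∈ I, lG j • EuclideanSpace.single j (1:ℝ)) i| = 0 := by
        rw [hG0]; simp
      exact (tendsto_const_nhds (x := (0:ℝ))).congr (fun _ => this.symm)
  · -- min(yb i, |lH i|)
    intro i
    by_cases hyi : yb i = 0
    · have : min (yb i) |lH i| = 0 := by
        rw [hyi]; exact le_antisymm (by simpa using min_le_left (0:ℝ) |lH i|)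
          (le_min le_rfl (abs_nonneg _))
      simpa [this] using tendsto_const_nhds
    · have hypos : 0 < yb i := lt_of_le_of_ne (hy01 i).1 (Ne.symm hyi)
      have hx0 : xb i = 0 := by
        rcases mul_eq_zero.1 (hxy i) with h1 | h2
        · exact h1
        · exact absurd h2 hyi
      have hmem : inI0p01 xb yb i := by
        refine ⟨hx0, ?_⟩
        rcases lt_or_eq_of_le (hy01 i).2 with h1 | h1
        · exact Or.inl ⟨hypos, h1⟩
        · exact Or.inr h1
      have : min (yb i) |lH i| = 0 := by
        rw [hH0 i hmem]; simp [le_of_lt hypos]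
      simpa [this] using tendsto_const_nhds
  · -- min(1 - yb i, lH' i)
    intro i
    have hterm : ∀ j ∈ Finset.univ, (0:ℝ) ≤ -(lH' j * (yb j - 1)) := fun j _ => by
      have := mul_nonneg (hlH' j) (by linarith [(hy01 j).2] : (0:ℝ) ≤ 1 - yb j)
      nlinarith
    have hsum : ∑ j, -(lH' j * (yb j - 1)) = 0 := by
      rw [Finset.sum_neg_distrib, hcompH', neg_zero]
    have hzero := (Finset.sum_eq_zero_iff_of_nonneg hterm).1 hsum i (Finset.mem_univ i)
    have hz : lH' i * (yb i - 1) = 0 := by linarith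
    rcases mul_eq_zero.1 hz with h1 | h2
    · have : min (1 - yb i) (lH' i) = 0 :=
        le_antisymm (by simpa [h1] using min_le_right (1 - yb i) (0:ℝ))
          (le_min (by linarith [(hy01 i).2]) (hlH' i))
      simpa [this] using tendsto_const_nhds
    · have h2' : 1 - yb i = 0 := by linarith
      have : min (1 - yb i) (lH' i) = 0 :=
        le_antisymm (by simpa [h2'] using min_le_left (0:ℝ) (lH' i))
          (le_min (by linarith) (hlH' i))
      simpa [this] using tendsto_const_nhds
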